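/- Let 𝔤 be the 4-dimensional real Lie algebra with basis X₁, X₂, Y₁, Y₂ whose only nonvanishing brackets among basis elements are [X₁, X₂] = −X₂ + 2Y₁ + 4Y₂, [X₁, Y₁] = −Y₁, and [X₁, Y₂] = Y₁ + Y₂. Let Ω be the alternating bilinear form with Ω(X₁,Y₁) = Ω(X₂,Y₂) = 1 and Ω vanishing on all other pairs of distinct basis elements, and let j be the linear map with jX_i = Y_i and jY_i = −X_i (i = 1, 2). Then Ω is a nondegenerate 2-cocycle, j is a positive compatible complex structure, the span of the image of N^j equals span{X₁ + 2X₂, Y₁ + 2Y₂}, this span is involutive, its Ω-orthogonal complement equals span{2X₁ − X₂, 2Y₁ − Y₂}, and that complement is not involutive. -/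

import Mathlib

/-- The algebraic Nijenhuis tensor of a linear map `j` on a Lie algebra. -/
def algNijenhuis {𝔤 : Type*} [LieRing 𝔤] [LieAlgebra ℝ 𝔤] (j : 𝔤 →ₗ[ℝ] 𝔤) (X Y : 𝔤) : 𝔤 :=
  ⁅j X, j Y⁆ - j ⁅j X, Y⁆ - j ⁅X, j Y⁆ - ⁅X, Y⁆

/-- A subspace `W` of a Lie algebra is involutive if `⁅W, W⁆ ⊆ W`. -/
def IsInvolutive {𝔤 : Type*} [LieRing 𝔤] [LieAlgebra ℝ 𝔤] (W : Set 𝔤) : Prop :=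
  ∀ u ∈ W, ∀ v ∈ W, ⁅u, v⁆ ∈ W

set_option maxHeartbeats 2000000 in
/-- Example 4.  Basis `b 0 = X₁`, `b 1 = X₂`, `b 2 = Y₁`, `b 3 = Y₂`;
only nonvanishing brackets `⁅X₁, X₂⁆ = -X₂ + 2Y₁ + 4Y₂`, `⁅X₁, Y₁⁆ = -Y₁`,
`⁅X₁, Y₂⁆ = Y₁ + Y₂`; standard `Ω` and `j`.
Then `Ω` is a nondegenerate 2-cocycle, `j` is a positive compatible complex structure,
`Im N^j = span {X₁ + 2X₂, Y₁ + 2Y₂}` is involutive, and its `Ω`-orthogonal complement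
`span {2X₁ - X₂, 2Y₁ - Y₂}` is not involutive. -/
theorem stmt_11 (𝔤 : Type*) [LieRing 𝔤] [LieAlgebra ℝ 𝔤]
    (b : Module.Basis (Fin 4) ℝ 𝔤)
    (hbr : ∀ i k : Fin 4, ⁅b i, b k⁆ =
      if i = 0 ∧ k = 1 then -(b 1) + (2 : ℝ) • b 2 + (4 : ℝ) • b 3 else
      if i = 1 ∧ k = 0 then -(-(b 1) + (2 : ℝ) • b 2 + (4 : ℝ) • b 3) else
      if i = 0 ∧ k = 2 then -(b 2) else if i = 2 ∧ k = 0 then b 2 else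
      if i = 0 ∧ k = 3 then b 2 + b 3 else if i = 3 ∧ k = 0 then -(b 2 + b 3) else 0)
    (Ω : 𝔤 →ₗ[ℝ] 𝔤 →ₗ[ℝ] ℝ)
    (hΩ : ∀ i k : Fin 4, Ω (b i) (b k) =
      !![0,0,1,0; 0,0,0,1; -1,0,0,0; 0,-1,0,0] i k)
    (j : 𝔤 →ₗ[ℝ] 𝔤)
    (hj0 : j (b 0) = b 2) (hj1 : j (b 1) = b 3)
    (hj2 : j (b 2) = -(b 0)) (hj3 : j (b 3) = -(b 1)) :
    (∀ X : 𝔤, (∀ Y : 𝔤, Ω X Y = 0) → X = 0) ∧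
    (∀ X Y Z : 𝔤, Ω ⁅X, Y⁆ Z + Ω ⁅Y, Z⁆ X + Ω ⁅Z, X⁆ Y = 0) ∧
    (∀ X : 𝔤, j (j X) = -X) ∧
    (∀ X Y : 𝔤, Ω (j X) (j Y) = Ω X Y) ∧
    (∀ X : 𝔤, X ≠ 0 → 0 < Ω X (j X)) ∧
    Submodule.span ℝ {v : 𝔤 | ∃ X Y : 𝔤, v = algNijenhuis j X Y} =
      Submodule.span ℝ {b 0 + (2 : ℝ) • b 1, b 2 + (2 : ℝ) • b 3} ∧
    IsInvolutive
      (↑(Submodule.span ℝ ({b 0 + (2 : ℝ) • b 1, b 2 + (2 : ℝ) • b 3} : Set 𝔤)) : Set 𝔤) ∧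
    {x : 𝔤 | ∀ w ∈ Submodule.span ℝ ({b 0 + (2 : ℝ) • b 1, b 2 + (2 : ℝ) • b 3} : Set 𝔤),
        Ω w x = 0} =
      (↑(Submodule.span ℝ ({(2 : ℝ) • b 0 - b 1, (2 : ℝ) • b 2 - b 3} : Set 𝔤)) : Set 𝔤) ∧
    ¬ IsInvolutive
      (↑(Submodule.span ℝ ({(2 : ℝ) • b 0 - b 1, (2 : ℝ) • b 2 - b 3} : Set 𝔤)) : Set 𝔤) := by
  have hX : ∀ X : 𝔤, X = b.repr X 0 • b 0 + b.repr X 1 • b 1 + b.repr X 2 • b 2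
      + b.repr X 3 • b 3 := by
    intro X
    have h := b.sum_repr X
    rw [Fin.sum_univ_four] at h
    exact h.symm
  have hrb : ∀ i k : Fin 4, b.repr (b i) k = if i = k then 1 else 0 := by
    intro i k
    simp [Module.Basis.repr_self, Finsupp.single_apply]
  have hΩf : ∀ X Y : 𝔤, Ω X Y = b.repr X 0 * b.repr Y 2 + b.repr X 1 * b.repr Y 3
      - b.repr X 2 * b.repr Y 0 - b.repr X 3 * b.repr Y 1 := by
    intro X Y
    conv_lhs => rw [hX X, hX Y]
    simp [hΩ, Matrix.vecHead, Matrix.vecTail]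
    ring
  have hΩb0 : ∀ Z : 𝔤, Ω (b 0) Z = b.repr Z 2 := by
    intro Z; rw [hΩf]; simp (config := { decide := true }) [hrb, Finsupp.single_apply]
  have hΩb1 : ∀ Z : 𝔤, Ω (b 1) Z = b.repr Z 3 := by
    intro Z; rw [hΩf]; simp (config := { decide := true }) [hrb, Finsupp.single_apply]
  have hΩb2 : ∀ Z : 𝔤, Ω (b 2) Z = -(b.repr Z 0) := by
    intro Z; rw [hΩf]; simp (config := { decide := true }) [hrb, Finsupp.single_apply]
  have hΩb3 : ∀ Z : 𝔤, Ω (b 3) Z = -(b.repr Z 1) := by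
    intro Z; rw [hΩf]; simp (config := { decide := true }) [hrb, Finsupp.single_apply]
  have hL : ∀ X Y : 𝔤, ⁅X, Y⁆ =
      (-(b.repr X 0 * b.repr Y 1 - b.repr X 1 * b.repr Y 0)) • b 1
      + (2*(b.repr X 0 * b.repr Y 1 - b.repr X 1 * b.repr Y 0)
         - (b.repr X 0 * b.repr Y 2 - b.repr X 2 * b.repr Y 0)
         + (b.repr X 0 * b.repr Y 3 - b.repr X 3 * b.repr Y 0)) • b 2
      + (4*(b.repr X 0 * b.repr Y 1 - b.repr X 1 * b.repr Y 0)
         + (b.repr X 0 * b.repr Y 3 - b.repr X 3 * b.repr Y 0)) • b 3 := by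
    intro X Y
    conv_lhs => rw [hX X, hX Y]
    simp (config := { decide := true }) only [add_lie, lie_add, smul_lie, lie_smul, hbr,
      if_true, if_false, and_true, and_false, true_and, false_and]
    module
  have hjX : ∀ X : 𝔤, j X = (-(b.repr X 2)) • b 0 + (-(b.repr X 3)) • b 1
      + (b.repr X 0) • b 2 + (b.repr X 1) • b 3 := by
    intro X
    conv_lhs => rw [hX X]
    simp only [map_add, map_smul, hj0, hj1, hj2, hj3]
    module
  have hjr0 : ∀ X : 𝔤, b.repr (j X) 0 = -(b.repr X 2) := by
    intro X; rw [hjX X]; simp [hrb]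
  have hjr1 : ∀ X : 𝔤, b.repr (j X) 1 = -(b.repr X 3) := by
    intro X; rw [hjX X]; simp [hrb]
  have hjr2 : ∀ X : 𝔤, b.repr (j X) 2 = b.repr X 0 := by
    intro X; rw [hjX X]; simp [hrb]
  have hjr3 : ∀ X : 𝔤, b.repr (j X) 3 = b.repr X 1 := by
    intro X; rw [hjX X]; simp [hrb]
  have hN : ∀ X Y : 𝔤, algNijenhuis j X Y =
      ((b.repr X 0 * b.repr Y 1 - b.repr X 1 * b.repr Y 0)
        - 2*(b.repr X 0 * b.repr Y 3 - b.repr X 3 * b.repr Y 0)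
        + 2*(b.repr X 1 * b.repr Y 2 - b.repr X 2 * b.repr Y 1)
        - (b.repr X 2 * b.repr Y 3 - b.repr X 3 * b.repr Y 2)) • (b 0 + (2:ℝ) • b 1)
      + (-2*(b.repr X 0 * b.repr Y 1 - b.repr X 1 * b.repr Y 0)
        - (b.repr X 0 * b.repr Y 3 - b.repr X 3 * b.repr Y 0)
        + (b.repr X 1 * b.repr Y 2 - b.repr X 2 * b.repr Y 1)
        + 2*(b.repr X 2 * b.repr Y 3 - b.repr X 3 * b.repr Y 2)) • (b 2 + (2:ℝ) • b 3) := by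
    intro X Y
    simp only [algNijenhuis]
    conv_lhs => rw [hX X, hX Y]
    simp (config := { decide := true }) only [map_add, map_smul, map_neg, map_sub, map_zero,
      add_lie, lie_add, smul_lie, lie_smul, neg_lie, lie_neg, smul_neg, neg_neg,
      smul_zero, zero_smul, add_zero, zero_add, neg_zero,
      hj0, hj1, hj2, hj3, hbr, if_true, if_false, and_true, and_false, true_and, false_and]
    module
  refine ⟨?_, ?_, ?_, ?_, ?_, ?_, ?_, ?_, ?_⟩
  · -- nondegenerate
    intro X h
    have e0 := h (b 2); have e1 := h (b 3); have e2 := h (b 0); have e3 := h (b 1)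
    rw [hΩf] at e0 e1 e2 e3
    simp (config := { decide := true }) [hrb, Finsupp.single_apply] at e0 e1 e2 e3
    rw [hX X, e0, e1, e2, e3]
    simp
  · -- cocycle
    intro X Y Z
    rw [hL X Y, hL Y Z, hL Z X]
    simp only [map_add, map_smul, LinearMap.add_apply, LinearMap.smul_apply,
      hΩb1, hΩb2, hΩb3, smul_eq_mul]
    ring
  · -- j ∘ j = -1
    intro X
    conv_lhs => rw [hX X]
    simp only [map_add, map_smul, hj0, hj1, hj2, hj3, map_neg]
    conv_rhs => rw [hX X]
    module
  · -- compatibility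
    intro X Y
    rw [hΩf (j X) (j Y), hΩf X Y, hjr0, hjr1, hjr2, hjr3, hjr0, hjr1, hjr2, hjr3]
    ring
  · -- positivity
    intro X hne
    rw [hΩf, hjr0, hjr1, hjr2, hjr3]
    by_contra hle
    push_neg at hle
    apply hne
    have h0 : b.repr X 0 = 0 := by
      nlinarith [mul_self_nonneg (b.repr X 0), mul_self_nonneg (b.repr X 1),
        mul_self_nonneg (b.repr X 2), mul_self_nonneg (b.repr X 3)]
    have h1 : b.repr X 1 = 0 := by
      nlinarith [mul_self_nonneg (b.repr X 0), mul_self_nonneg (b.repr X 1),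
        mul_self_nonneg (b.repr X 2), mul_self_nonneg (b.repr X 3)]
    have h2 : b.repr X 2 = 0 := by
      nlinarith [mul_self_nonneg (b.repr X 0), mul_self_nonneg (b.repr X 1),
        mul_self_nonneg (b.repr X 2), mul_self_nonneg (b.repr X 3)]
    have h3 : b.repr X 3 = 0 := by
      nlinarith [mul_self_nonneg (b.repr X 0), mul_self_nonneg (b.repr X 1),
        mul_self_nonneg (b.repr X 2), mul_self_nonneg (b.repr X 3)]
    rw [hX X, h0, h1, h2, h3]
    simp
  · -- span of image of Nijenhuis
    apply le_antisymm
    · rw [Submodule.span_le]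
      rintro v ⟨X, Y, rfl⟩
      rw [SetLike.mem_coe, hN]
      exact Submodule.add_mem _
        (Submodule.smul_mem _ _ (Submodule.subset_span (Set.mem_insert _ _)))
        (Submodule.smul_mem _ _ (Submodule.subset_span (Set.mem_insert_of_mem _ rfl)))
    · rw [Submodule.span_le]
      rintro v hv
      simp only [Set.mem_insert_iff, Set.mem_singleton_iff] at hv
      have m1 : algNijenhuis j (b 0) (b 1) ∈
          Submodule.span ℝ {v : 𝔤 | ∃ X Y : 𝔤, v = algNijenhuis j X Y} :=
        Submodule.subset_span ⟨b 0, b 1, rfl⟩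
      have m2 : algNijenhuis j (b 0) (b 3) ∈
          Submodule.span ℝ {v : 𝔤 | ∃ X Y : 𝔤, v = algNijenhuis j X Y} :=
        Submodule.subset_span ⟨b 0, b 3, rfl⟩
      rcases hv with rfl | rfl
      · have key : b 0 + (2:ℝ) • b 1 = (1/5:ℝ) • algNijenhuis j (b 0) (b 1)
            + (-(2/5):ℝ) • algNijenhuis j (b 0) (b 3) := by
          rw [hN, hN]
          simp (config := { decide := true }) [hrb, Finsupp.single_apply]
          module
        rw [SetLike.mem_coe, key]
        exact Submodule.add_mem _ (Submodule.smul_mem _ _ m1) (Submodule.smul_mem _ _ m2)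
      · have key : b 2 + (2:ℝ) • b 3 = (-(2/5):ℝ) • algNijenhuis j (b 0) (b 1)
            + (-(1/5):ℝ) • algNijenhuis j (b 0) (b 3) := by
          rw [hN, hN]
          simp (config := { decide := true }) [hrb, Finsupp.single_apply]
          module
        rw [SetLike.mem_coe, key]
        exact Submodule.add_mem _ (Submodule.smul_mem _ _ m1) (Submodule.smul_mem _ _ m2)
  · -- involutive
    intro u' hu' v' hv'
    rw [SetLike.mem_coe, Submodule.mem_span_pair] at hu' hv'
    obtain ⟨a1, a2, ha⟩ := hu'
    obtain ⟨c1, c2, hc⟩ := hv'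
    rw [SetLike.mem_coe, ← ha, ← hc]
    have key : ⁅a1 • (b 0 + (2:ℝ) • b 1) + a2 • (b 2 + (2:ℝ) • b 3),
        c1 • (b 0 + (2:ℝ) • b 1) + c2 • (b 2 + (2:ℝ) • b 3)⁆
        = (a1*c2 - a2*c1) • (b 2 + (2:ℝ) • b 3) := by
      simp (config := { decide := true }) only [add_lie, lie_add, smul_lie, lie_smul, hbr,
        if_true, if_false, and_true, and_false, true_and, false_and]
      module
    rw [key]
    exact Submodule.smul_mem _ _ (Submodule.subset_span (Set.mem_insert_of_mem _ rfl))
  · -- orthogonal complement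
    ext x
    simp only [Set.mem_setOf_eq, SetLike.mem_coe]
    constructor
    · intro hx
      have h1 := hx (b 0 + (2:ℝ) • b 1) (Submodule.subset_span (Set.mem_insert _ _))
      have h2 := hx (b 2 + (2:ℝ) • b 3) (Submodule.subset_span (Set.mem_insert_of_mem _ rfl))
      simp only [map_add, map_smul, LinearMap.add_apply, LinearMap.smul_apply,
        hΩb0, hΩb1, hΩb2, hΩb3, smul_eq_mul] at h1 h2
      rw [Submodule.mem_span_pair]
      refine ⟨-(b.repr x 1), -(b.repr x 3), ?_⟩
      conv_rhs => rw [hX x]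
      match_scalars <;> linarith
    · intro hx w hw
      rw [Submodule.mem_span_pair] at hx hw
      obtain ⟨a1, a2, ha⟩ := hx
      obtain ⟨c1, c2, hc⟩ := hw
      rw [← ha, ← hc]
      simp (config := { decide := true }) only [map_add, map_smul, map_sub,
        LinearMap.add_apply, LinearMap.smul_apply, LinearMap.sub_apply, hΩb0, hΩb1, hΩb2,
        hΩb3, smul_eq_mul, Finsupp.add_apply, Finsupp.smul_apply, Finsupp.sub_apply, hrb,
        if_true, if_false]
      ring
  · -- not involutive
    intro hInv
    have hm := hInv ((2:ℝ) • b 0 - b 1)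
      (Submodule.subset_span (Set.mem_insert _ _)) ((2:ℝ) • b 2 - b 3)
      (Submodule.subset_span (Set.mem_insert_of_mem _ rfl))
    have hbr' : ⁅(2:ℝ) • b 0 - b 1, (2:ℝ) • b 2 - b 3⁆
        = (-6:ℝ) • b 2 + (-2:ℝ) • b 3 := by
      simp (config := { decide := true }) only [sub_lie, lie_sub, smul_lie, lie_smul, hbr,
        if_true, if_false, and_true, and_false, true_and, false_and]
      module
    rw [SetLike.mem_coe, hbr', Submodule.mem_span_pair] at hm
    obtain ⟨a, c, h⟩ := hm
    have h2 := congrArg (fun z => b.repr z 2) h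
    have h3 := congrArg (fun z => b.repr z 3) h
    simp (config := { decide := true }) only [map_add, map_smul, map_sub, Finsupp.add_apply,
      Finsupp.smul_apply, Finsupp.sub_apply, hrb, smul_eq_mul, if_true, if_false,
      mul_one, mul_zero, sub_zero, zero_sub, add_zero, zero_add] at h2 h3
    linarith
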